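/- Let p be an odd prime. Then (B_{2p−2} − 1 + 1/p)/(2p−2) ≡ (B_{p−1} − 1 + 1/p)/(p−1) (mod p) as rational numbers. -/

import Mathlib

open Finset

/-- `x ≡ y (mod p^k)` for rationals: `x - y = p^k * (c/d)` with `p ∤ d`. -/
def ratCongr (p k : ℕ) (x y : ℚ) : Prop :=
  ∃ c d : ℤ, ¬ (p : ℤ) ∣ d ∧ x - y = (p : ℚ) ^ k * ((c : ℚ) / (d : ℚ))

/-- The Wilson quotient `W_p = ((p-1)! + 1)/p` (an integer by Wilson's theorem). -/
def wilsonQuotient (p : ℕ) : ℤ := ((Nat.factorial (p - 1) : ℤ) + 1) / p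

/-- The Fermat quotient `q_p(a) = (a^(p-1) - 1)/p` (an integer for `p ∤ a`). -/
def fermatQuotient (p a : ℕ) : ℤ := ((a : ℤ) ^ (p - 1) - 1) / p

/-- A prime `p` is a Wilson prime if `p ∣ W_p`. -/
def IsWilsonPrime (p : ℕ) : Prop := (p : ℤ) ∣ wilsonQuotient p

/-- A prime `p` is a Lerch prime if `∑_{a=1}^{p-1} q_p(a) ≡ W_p (mod p²)`. -/
def IsLerchPrime (p : ℕ) : Prop :=
  (p : ℤ) ^ 2 ∣ (∑ a ∈ Icc 1 (p - 1), fermatQuotient p a) - wilsonQuotient p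

/-- The harmonic number `H_a = ∑_{k=1}^{a} 1/k`. -/
def harmonicNum (a : ℕ) : ℚ := ∑ k ∈ Icc 1 a, (1 : ℚ) / k

/-- The generalized harmonic number `H_{a,2} = ∑_{k=1}^{a} 1/k²`. -/
def harmonicNum2 (a : ℕ) : ℚ := ∑ k ∈ Icc 1 a, (1 : ℚ) / (k : ℚ) ^ 2

section Carlitz

set_option linter.unusedSectionVars false

variable {p : ℕ} [hp : Fact p.Prime]

private lemma carlitz_pn_pow (n : ℕ) : padicNorm p ((p:ℚ)^n) = (p:ℚ)^(-(n:ℤ)) := by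
  induction n with
  | zero => simp [padicNorm.one]
  | succ n ih =>
      rw [pow_succ, padicNorm.mul, ih, padicNorm.padicNorm_p_of_prime]
      rw [← zpow_neg_one, ← zpow_add₀ (by exact_mod_cast hp.out.pos.ne' : (p:ℚ) ≠ 0)]
      push_cast; ring_nf

private lemma carlitz_pn_nat_eq {n : ℕ} (hn : n ≠ 0) :
    padicNorm p (n : ℚ) = (p:ℚ)^(-(padicValNat p n : ℤ)) := by
  rw [padicNorm.eq_zpow_of_nonzero (by exact_mod_cast hn), padicValRat.of_nat]

private lemma carlitz_val_le {j : ℕ} (hj : 1 ≤ j) (hp3 : 3 ≤ p) :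
    padicValNat p (j+1) ≤ j - 1 := by
  by_contra h
  push_neg at h
  have hd : p ^ j ∣ (j+1) := dvd_trans (pow_dvd_pow p (by omega)) (pow_padicValNat_dvd)
  have h1 : p ^ j ≤ j + 1 := Nat.le_of_dvd (by omega) hd
  have h2 : j + 1 ≤ 2 ^ j := Nat.succ_le_of_lt ((Nat.lt_two_pow_self (n := j)))
  have h3 : 2 ^ j < 3 ^ j := Nat.pow_lt_pow_left (by norm_num) (by omega)
  have h4 : 3 ^ j ≤ p ^ j := Nat.pow_le_pow_left hp3 j
  omega

private lemma carlitz_val_le2 {j : ℕ} (hj : 2 ≤ j) (hp5 : 5 ≤ p) :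
    padicValNat p (j+1) ≤ j - 2 := by
  by_contra h
  push_neg at h
  have hd : p ^ (j-1) ∣ (j+1) := dvd_trans (pow_dvd_pow p (by omega)) (pow_padicValNat_dvd)
  have h1 : p ^ (j-1) ≤ j + 1 := Nat.le_of_dvd (by omega) hd
  have h2 : j + 1 ≤ 2 ^ j := Nat.succ_le_of_lt ((Nat.lt_two_pow_self (n := j)))
  have h2' : 2 ^ j ≤ 4 ^ (j-1) := by
    calc 2 ^ j ≤ 2 ^ (2*(j-1)) := Nat.pow_le_pow_right (by norm_num) (by omega)
    _ = 4 ^ (j-1) := by rw [pow_mul]; norm_num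
  have h3 : 4 ^ (j-1) < 5 ^ (j-1) := Nat.pow_lt_pow_left (by norm_num) (by omega)
  have h4 : 5 ^ (j-1) ≤ p ^ (j-1) := Nat.pow_le_pow_left hp5 _
  omega

private lemma carlitz_faul (m : ℕ) :
    (∑ k ∈ range p, (k:ℚ)^m) - (p:ℚ) * bernoulli m
      = ∑ i ∈ range m, ((p:ℚ) * bernoulli i) * (m.choose i : ℚ) * (p:ℚ)^(m-i)
          / ((m+1-i : ℕ) : ℚ) := by
  have h := sum_range_pow p m
  rw [Finset.sum_range_succ] at h
  have hm1 : ((m:ℚ) + 1) ≠ 0 := by positivity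
  have hlast : bernoulli m * ((m+1).choose m : ℚ) * (p:ℚ)^(m+1-m) / ((m:ℚ)+1)
      = (p:ℚ) * bernoulli m := by
    rw [Nat.choose_succ_self_right, show m+1-m = 1 by omega]
    field_simp
    push_cast
    ring
  rw [hlast] at h
  rw [h]
  rw [add_sub_cancel_right]
  apply Finset.sum_congr rfl
  intro i hi
  have him : i < m := Finset.mem_range.mp hi
  have key : (m.choose i : ℚ) * ((m:ℚ)+1) = ((m+1).choose i : ℚ) * ((m+1-i : ℕ) : ℚ) := by
    exact_mod_cast congrArg (Nat.cast (R := ℚ)) (Nat.choose_mul_succ_eq m i)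
  have hD : ((m+1-i : ℕ) : ℚ) ≠ 0 := by
    have : 0 < m+1-i := by omega
    exact_mod_cast this.ne'
  have hpow : (p:ℚ)^(m+1-i) = (p:ℚ) * (p:ℚ)^(m-i) := by
    rw [show m+1-i = (m-i)+1 by omega, pow_succ]; ring
  rw [hpow]
  field_simp
  linear_combination (-1 * bernoulli i * (p:ℚ) * (p:ℚ)^(m-i)) * key

private lemma carlitz_term_bound {i m : ℕ} (him : i < m) (t : ℕ)
    (hB : padicNorm p ((p:ℚ) * bernoulli i) ≤ 1)
    (hv : padicValNat p (m+1-i) + t ≤ m - i) :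
    padicNorm p ((p:ℚ) * bernoulli i * (m.choose i : ℚ) * (p:ℚ)^(m-i) / ((m+1-i:ℕ):ℚ))
      ≤ (p:ℚ)^(-(t:ℤ)) := by
  have hP1 : (1:ℚ) < p := by exact_mod_cast hp.out.one_lt
  have hP0 : (0:ℚ) < p := by linarith
  set v := padicValNat p (m+1-i) with hvdef
  have hDnorm : padicNorm p ((m+1-i:ℕ):ℚ) = (p:ℚ)^(-(v:ℤ)) := carlitz_pn_nat_eq (by omega)
  rw [padicNorm.div, padicNorm.mul, padicNorm.mul, hDnorm, carlitz_pn_pow]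
  have hC : padicNorm p (m.choose i : ℚ) ≤ 1 := padicNorm.of_nat _
  have hCn : 0 ≤ padicNorm p (m.choose i : ℚ) := padicNorm.nonneg _
  have hBn : 0 ≤ padicNorm p ((p:ℚ) * bernoulli i) := padicNorm.nonneg _
  have h1 : padicNorm p ((p:ℚ) * bernoulli i) * padicNorm p (m.choose i : ℚ)
      * (p:ℚ)^(-((m-i:ℕ):ℤ)) ≤ (p:ℚ)^(-((m-i:ℕ):ℤ)) := by
    have hz : (0:ℚ) ≤ (p:ℚ)^(-((m-i:ℕ):ℤ)) := by positivity
    have hab : padicNorm p ((p:ℚ) * bernoulli i) * padicNorm p (m.choose i : ℚ) ≤ 1 :=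
      mul_le_one₀ hB hCn hC
    exact mul_le_of_le_one_left hz hab
  have h2 : (0:ℚ) < (p:ℚ)^(-(v:ℤ)) := by positivity
  rw [div_le_iff₀ h2]
  calc padicNorm p ((p:ℚ) * bernoulli i) * padicNorm p (m.choose i : ℚ)
      * (p:ℚ)^(-((m-i:ℕ):ℤ)) ≤ (p:ℚ)^(-((m-i:ℕ):ℤ)) := h1
    _ ≤ (p:ℚ)^(-(t:ℤ)) * (p:ℚ)^(-(v:ℤ)) := by
        rw [← zpow_add₀ hP0.ne']
        apply zpow_le_zpow_right₀ (le_of_lt hP1)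
        push_cast
        omega

private lemma carlitz_S_norm_le (m : ℕ) : padicNorm p (∑ k ∈ range p, (k:ℚ)^m) ≤ 1 := by
  apply padicNorm.sum_le' _ zero_le_one
  intro k _
  rw [show ((k:ℚ)^m) = ((k^m : ℕ) : ℚ) by push_cast; ring]
  exact padicNorm.of_nat _

private lemma carlitz_bernoulli_int (hp3 : 3 ≤ p) :
    ∀ m : ℕ, padicNorm p ((p:ℚ) * bernoulli m) ≤ 1 := by
  intro m
  induction m using Nat.strong_induction_on with
  | _ m ih =>
    have hP1 : (1:ℚ) < p := by exact_mod_cast hp.out.one_lt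
    have hfaul : (p:ℚ) * bernoulli m = (∑ k ∈ range p, (k:ℚ)^m)
        - ∑ i ∈ range m, ((p:ℚ) * bernoulli i) * (m.choose i : ℚ) * (p:ℚ)^(m-i)
          / ((m+1-i : ℕ) : ℚ) := by
      have := carlitz_faul (p := p) m
      linarith [this]
    rw [hfaul, sub_eq_add_neg]
    refine le_trans padicNorm.nonarchimedean (max_le (carlitz_S_norm_le m) ?_)
    rw [padicNorm.neg]
    apply padicNorm.sum_le' _ zero_le_one
    intro i hi
    have him : i < m := mem_range.mp hi
    refine le_trans (carlitz_term_bound him 1 (ih i him) ?_) ?_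
    · have := carlitz_val_le (j := m - i) (by omega) hp3
      rw [show m - i + 1 = m + 1 - i by omega] at this
      omega
    · rw [show (-(1:ℕ):ℤ) = -1 by norm_num, zpow_neg_one]
      rw [inv_le_one₀ (by linarith)]
      linarith

private lemma carlitz_toRatCongr {q : ℚ} (h : padicNorm p q ≤ (p:ℚ)^(-1:ℤ)) :
    ∃ c d : ℤ, ¬ (p : ℤ) ∣ d ∧ q = (p : ℚ) ^ 1 * ((c : ℚ) / (d : ℚ)) := by
  have hp1 : 1 < p := hp.out.one_lt
  by_cases hq : q = 0
  · refine ⟨0, 1, ?_, by simp [hq]⟩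
    intro hd
    have : (p:ℤ) = 1 := Int.eq_one_of_dvd_one (by positivity) hd
    omega
  · have hppos : (0:ℚ) < p := by exact_mod_cast hp.out.pos
    have hpinv : (p:ℚ)^(-1:ℤ) < 1 := by
      rw [zpow_neg_one, inv_lt_one₀ hppos]; exact_mod_cast hp1
    have hq_eq : q = (q.num : ℚ) / (q.den : ℚ) := (Rat.num_div_den q).symm
    have hnorm_div : padicNorm p q = padicNorm p (q.num : ℚ) / padicNorm p (q.den : ℚ) := by
      nth_rewrite 1 [hq_eq]; exact padicNorm.div (p := p) _ _
    have hden : ¬ (p:ℤ) ∣ (q.den : ℤ) := by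
      intro hd
      have hdn : p ∣ q.den := by exact_mod_cast hd
      have hnum : ¬ (p:ℤ) ∣ q.num := by
        intro hn
        have h1 : p ∣ q.num.natAbs := by
          have := Int.natAbs_dvd_natAbs.mpr hn; simpa using this
        have h2 : p ∣ 1 := q.reduced ▸ Nat.dvd_gcd h1 hdn
        have := Nat.dvd_one.mp h2; omega
      have h1 : padicNorm p (q.num : ℚ) = 1 := by
        rw [show ((q.num : ℚ)) = ((q.num : ℤ) : ℚ) by norm_cast]
        exact (padicNorm.int_eq_one_iff _).mpr hnum
      have h2 : padicNorm p (q.den : ℚ) ≤ 1 := padicNorm.of_nat _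
      have h3 : 0 < padicNorm p (q.den : ℚ) := by
        have hne := padicNorm.nonzero (p := p) (q := (q.den : ℚ))
          (by exact_mod_cast q.den_nz)
        have h4 := padicNorm.nonneg (p := p) ((q.den : ℚ))
        rcases lt_or_eq_of_le h4 with h5 | h5
        · exact h5
        · exact absurd h5.symm hne
      have : 1 ≤ padicNorm p q := by
        rw [hnorm_div, h1, le_div_iff₀ h3]; simpa using h2
      linarith
    have hden1 : padicNorm p (q.den : ℚ) = 1 := by
      rw [show ((q.den : ℚ)) = (((q.den:ℤ) : ℤ) : ℚ) by norm_cast]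
      exact (padicNorm.int_eq_one_iff _).mpr hden
    have hnumle : padicNorm p ((q.num : ℤ) : ℚ) ≤ (p:ℚ)^(-(1:ℕ):ℤ) := by
      rw [hnorm_div, hden1, div_one] at h
      simpa using h
    have hdvd : ((p^1 : ℕ) : ℤ) ∣ q.num := padicNorm.dvd_iff_norm_le.mpr hnumle
    obtain ⟨c, hc⟩ : (p:ℤ) ∣ q.num := by simpa using hdvd
    refine ⟨c, (q.den : ℤ), hden, ?_⟩
    conv_lhs => rw [hq_eq]
    rw [hc]
    push_cast
    ring

private lemma carlitz_refined (hp5 : 5 ≤ p) {m : ℕ} (hm : 4 ≤ m) (hme : Even m) :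
    padicNorm p ((∑ k ∈ range p, (k:ℚ)^m) - (p:ℚ) * bernoulli m) ≤ (p:ℚ)^(-2:ℤ) := by
  rw [carlitz_faul]
  apply padicNorm.sum_le' _ (by positivity)
  intro i hi
  have him : i < m := mem_range.mp hi
  by_cases hieq : i = m - 1
  · have hodd : Odd i := by
      rcases hme with ⟨r, hr⟩
      exact ⟨r - 1, by omega⟩
    have hB0 : bernoulli i = 0 := by
      rw [bernoulli_eq_bernoulli'_of_ne_one (by omega)]
      exact bernoulli'_eq_zero_of_odd hodd (by omega)
    rw [hB0]
    norm_num [padicNorm.zero]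
  · have hj2 : 2 ≤ m - i := by omega
    have hv : padicValNat p (m+1-i) + 2 ≤ m - i := by
      have h6 := carlitz_val_le2 hj2 hp5
      rw [show m - i + 1 = m + 1 - i by omega] at h6
      omega
    have h7 := carlitz_term_bound him 2 (carlitz_bernoulli_int (by omega) i) hv
    simpa using h7

private lemma carlitz_fermat_step (hp3 : 3 ≤ p) :
    padicNorm p ((∑ k ∈ range p, (k:ℚ)^(2*(p-1))) - 2*(∑ k ∈ range p, (k:ℚ)^(p-1))
      + ((p:ℚ) - 1)) ≤ (p:ℚ)^(-2:ℤ) := by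
  have hpp : 0 < p := by omega
  have h1 : ∀ k:ℕ, ((k:ℚ)^(p-1) - 1)^2 = (k:ℚ)^(2*(p-1)) - 2*(k:ℚ)^(p-1) + 1 := by
    intro k; rw [two_mul, pow_add]; ring
  have h2 : ∑ k ∈ range p, ((k:ℚ)^(p-1) - 1)^2
      = (∑ k ∈ range p, (k:ℚ)^(2*(p-1))) - 2*(∑ k ∈ range p, (k:ℚ)^(p-1)) + p := by
    simp only [h1]
    rw [Finset.sum_add_distrib, Finset.sum_sub_distrib, ← Finset.mul_sum, Finset.sum_const,
      card_range, nsmul_eq_mul, mul_one]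
  have h3 : (∑ k ∈ range p, (k:ℚ)^(2*(p-1))) - 2*(∑ k ∈ range p, (k:ℚ)^(p-1)) + ((p:ℚ) - 1)
      = ∑ k ∈ Ico 1 p, ((k:ℚ)^(p-1) - 1)^2 := by
    have h4 : ∑ k ∈ range p, ((k:ℚ)^(p-1) - 1)^2
        = ((0:ℚ)^(p-1) - 1)^2 + ∑ k ∈ Ico 1 p, ((k:ℚ)^(p-1) - 1)^2 := by
      rw [Finset.range_eq_Ico, Finset.sum_eq_sum_Ico_succ_bot hpp]
      norm_num
    rw [zero_pow (by omega : p - 1 ≠ 0)] at h4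
    norm_num at h4
    linarith [h2, h4]
  rw [h3]
  apply padicNorm.sum_le' _ (by positivity)
  intro k hk
  have hk1 : 1 ≤ k := (Finset.mem_Ico.mp hk).1
  have hkp : k < p := (Finset.mem_Ico.mp hk).2
  have hdvd : ((p^1 : ℕ) : ℤ) ∣ ((k:ℤ)^(p-1) - 1) := by
    rw [pow_one]
    have hk0 : (k : ZMod p) ≠ 0 := by
      rw [Ne, ZMod.natCast_eq_zero_iff]
      exact Nat.not_dvd_of_pos_of_lt (by omega) hkp
    have hfe := ZMod.pow_card_sub_one_eq_one hk0
    have h5 : (((k:ℤ)^(p-1) - 1 : ℤ) : ZMod p) = 0 := by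
      push_cast
      rw [hfe]; ring
    exact (ZMod.intCast_zmod_eq_zero_iff_dvd _ _).mp h5
  have hg : padicNorm p ((k:ℚ)^(p-1) - 1) ≤ (p:ℚ)^(-1:ℤ) := by
    have := padicNorm.dvd_iff_norm_le.mp hdvd
    rw [show (((k:ℤ)^(p-1) - 1 : ℤ) : ℚ) = (k:ℚ)^(p-1) - 1 by push_cast; ring] at this
    simpa using this
  have hgn : 0 ≤ padicNorm p ((k:ℚ)^(p-1) - 1) := padicNorm.nonneg _
  rw [sq, padicNorm.mul]
  calc padicNorm p ((k:ℚ)^(p-1) - 1) * padicNorm p ((k:ℚ)^(p-1) - 1)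
      ≤ (p:ℚ)^(-1:ℤ) * (p:ℚ)^(-1:ℤ) := by
        apply mul_le_mul hg hg hgn (by positivity)
    _ = (p:ℚ)^(-2:ℤ) := by
        rw [← zpow_add₀ (by exact_mod_cast hp.out.pos.ne' : (p:ℚ) ≠ 0)]
        norm_num

private theorem carlitz_main5 (hp5 : 5 ≤ p) (hodd : Odd p) :
    ratCongr p 1
      ((bernoulli (2 * p - 2) - 1 + 1 / (p : ℚ)) / (2 * (p : ℚ) - 2))
      ((bernoulli (p - 1) - 1 + 1 / (p : ℚ)) / ((p : ℚ) - 1)) := by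
  have hP5 : (5:ℚ) ≤ (p:ℚ) := by exact_mod_cast hp5
  have hP0 : (p:ℚ) ≠ 0 := by linarith
  have hP1 : (p:ℚ) - 1 ≠ 0 := by intro h; linarith [h]
  have hP1' : 2 * (p:ℚ) - 2 ≠ 0 := by intro h; nlinarith [h]
  set S1 : ℚ := ∑ k ∈ range p, (k:ℚ)^(p-1) with hS1
  set S2 : ℚ := ∑ k ∈ range p, (k:ℚ)^(2*(p-1)) with hS2
  set A : ℚ := S2 - (p:ℚ) * bernoulli (2*(p-1)) with hA
  set B : ℚ := S1 - (p:ℚ) * bernoulli (p-1) with hB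
  set C : ℚ := S2 - 2*S1 + ((p:ℚ) - 1) with hC
  have hidx : 2 * p - 2 = 2 * (p - 1) := by omega
  have hkey : ((bernoulli (2 * p - 2) - 1 + 1 / (p : ℚ)) / (2 * (p : ℚ) - 2))
      - ((bernoulli (p - 1) - 1 + 1 / (p : ℚ)) / ((p : ℚ) - 1))
      = (-A + 2*B + C) / (2 * ((p:ℚ)-1) * (p:ℚ)) := by
    rw [hidx, hA, hB, hC]
    field_simp
    ring
  have hnormN : padicNorm p (-A + 2*B + C) ≤ (p:ℚ)^(-2:ℤ) := by
    have hnA : padicNorm p (-A) ≤ (p:ℚ)^(-2:ℤ) := by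
      rw [padicNorm.neg]
      exact carlitz_refined hp5 (by omega) ⟨p-1, by omega⟩
    have hnB : padicNorm p (2*B) ≤ (p:ℚ)^(-2:ℤ) := by
      rw [padicNorm.mul]
      have h2le : padicNorm p (2:ℚ) ≤ 1 := by
        rw [show (2:ℚ) = ((2:ℕ):ℚ) by norm_num]
        exact padicNorm.of_nat _
      have hBle : padicNorm p B ≤ (p:ℚ)^(-2:ℤ) := by
        apply carlitz_refined hp5 (by omega)
        rcases hodd with ⟨r, hr⟩
        exact ⟨r, by omega⟩
      calc padicNorm p (2:ℚ) * padicNorm p B ≤ 1 * ((p:ℚ)^(-2:ℤ)) :=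
            mul_le_mul h2le hBle (padicNorm.nonneg _) zero_le_one
        _ = (p:ℚ)^(-2:ℤ) := one_mul _
    have hnC : padicNorm p C ≤ (p:ℚ)^(-2:ℤ) := carlitz_fermat_step (by omega)
    calc padicNorm p (-A + 2*B + C)
        ≤ max (padicNorm p (-A + 2*B)) (padicNorm p C) := padicNorm.nonarchimedean
      _ ≤ max (max (padicNorm p (-A)) (padicNorm p (2*B))) (padicNorm p C) := by
          apply max_le_max_right
          exact padicNorm.nonarchimedean
      _ ≤ (p:ℚ)^(-2:ℤ) := by
          apply max_le (max_le hnA hnB) hnC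
  have hden : padicNorm p (2 * ((p:ℚ)-1) * (p:ℚ)) = ((p:ℚ))⁻¹ := by
    rw [padicNorm.mul, padicNorm.mul]
    have h2 : padicNorm p (2:ℚ) = 1 := by
      rw [show (2:ℚ) = ((2:ℤ):ℚ) by norm_num]
      refine (padicNorm.int_eq_one_iff _).mpr ?_
      intro hd
      have := Int.le_of_dvd (by norm_num) hd
      omega
    have hpm1 : padicNorm p ((p:ℚ)-1) = 1 := by
      rw [show ((p:ℚ)-1) = (((p:ℤ)-1 : ℤ):ℚ) by push_cast; ring]
      refine (padicNorm.int_eq_one_iff _).mpr ?_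
      intro hd
      have := Int.le_of_dvd (by omega) hd
      omega
    rw [h2, hpm1, padicNorm.padicNorm_p_of_prime]
    ring
  have hfinal : padicNorm p
      (((bernoulli (2 * p - 2) - 1 + 1 / (p : ℚ)) / (2 * (p : ℚ) - 2))
       - ((bernoulli (p - 1) - 1 + 1 / (p : ℚ)) / ((p : ℚ) - 1))) ≤ (p:ℚ)^(-1:ℤ) := by
    rw [hkey, padicNorm.div, hden, div_eq_mul_inv, inv_inv]
    calc padicNorm p (-A + 2*B + C) * (p:ℚ) ≤ (p:ℚ)^(-2:ℤ) * (p:ℚ) := by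
          apply mul_le_mul_of_nonneg_right hnormN (by linarith)
      _ = (p:ℚ)^(-1:ℤ) := by
          rw [← zpow_add_one₀ hP0]
          norm_num
  exact carlitz_toRatCongr hfinal

end Carlitz

theorem stmt_3 (p : ℕ) (hp : p.Prime) (hodd : Odd p) :
    ratCongr p 1
      ((bernoulli (2 * p - 2) - 1 + 1 / (p : ℚ)) / (2 * (p : ℚ) - 2))
      ((bernoulli (p - 1) - 1 + 1 / (p : ℚ)) / ((p : ℚ) - 1)) := by
  haveI : Fact p.Prime := ⟨hp⟩
  rcases eq_or_ne p 3 with h3 | h3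
  · subst h3
    have hb4 : bernoulli 4 = -1/30 := by
      rw [bernoulli_eq_bernoulli'_of_ne_one (by norm_num)]
      exact bernoulli'_four
    have hb2 : bernoulli 2 = 1/6 := by
      rw [bernoulli_eq_bernoulli'_of_ne_one (by norm_num)]
      exact bernoulli'_two
    refine ⟨1, 40, by norm_num, ?_⟩
    norm_num [show 2*3-2 = 4 from rfl, show 3-1 = 2 from rfl, hb4, hb2]
  · have hp5 : 5 ≤ p := by
      have h2 := hp.two_le
      have hne2 : p ≠ 2 := by
        intro h; subst h; exact (Nat.not_odd_iff_even.mpr (by norm_num)) hodd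
      have hne4 : p ≠ 4 := by
        intro h; subst h; exact (Nat.not_odd_iff_even.mpr (by decide)) hodd
      omega
    exact carlitz_main5 hp5 hodd
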